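/- For any modal formula A, the following are equivalent: (1) A is a theorem of MND; (2) A is valid in all MND-frames; (3) A is valid in all finite MND-frames. -/

import Mathlib

/-- Modal formulas: variables, ⊥, →, □. -/
inductive Fml : Type
  | var : ℕ → Fml
  | bot : Fml
  | imp : Fml → Fml → Fml
  | box : Fml → Fml
  deriving DecidableEq

namespace Fml

/-- ¬A is an abbreviation for A → ⊥. -/
def neg (A : Fml) : Fml := imp A bot

/-- ⊤ is an abbreviation for ¬⊥. -/
def top : Fml := neg bot

/-- A ∧ B is an abbreviation for ¬(A → ¬B). -/
def and (A B : Fml) : Fml := neg (imp A (neg B))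

/-- Uniform substitution. -/
def subst (σ : ℕ → Fml) : Fml → Fml
  | var n => σ n
  | bot => bot
  | imp A B => imp (subst σ A) (subst σ B)
  | box A => box (subst σ A)

end Fml

/-- A formula is a propositional tautology if it is true under every valuation
that respects ⊥ and →, treating variables and boxed formulas as atoms. -/
def IsTautology (A : Fml) : Prop :=
  ∀ val : Fml → Bool,
    (val Fml.bot = false) →
    (∀ B C : Fml, val (Fml.imp B C) = (!(val B) || val C)) →
    val A = true

/-- Provability in the extension of the logic MN by the axioms in `Ax`:
axioms are all propositional tautologies and the members of `Ax`; the rules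
are Modus Ponens, Necessitation, and RM. -/
inductive MNProv (Ax : Fml → Prop) : Fml → Prop
  | taut {A : Fml} : IsTautology A → MNProv Ax A
  | ax {A : Fml} : Ax A → MNProv Ax A
  | mp {A B : Fml} : MNProv Ax (A.imp B) → MNProv Ax A → MNProv Ax B
  | nec {A : Fml} : MNProv Ax A → MNProv Ax A.box
  | rm {A B : Fml} : MNProv Ax (A.imp B) → MNProv Ax (A.box.imp B.box)

/-- The axiom P : ¬□⊥. -/
def AxP : Fml → Prop := fun A => A = (Fml.box Fml.bot).neg

/-- The axiom scheme D : ¬(□B ∧ □¬B). -/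
def AxD : Fml → Prop := fun A => ∃ B : Fml, A = ((B.box).and (B.neg.box)).neg

/-- The axiom scheme 4 : □B → □□B. -/
def AxF : Fml → Prop := fun A => ∃ B : Fml, A = B.box.imp B.box.box

def MN : Fml → Prop := MNProv (fun _ => False)
def MNP : Fml → Prop := MNProv AxP
def MND : Fml → Prop := MNProv AxD
def MNF : Fml → Prop := MNProv AxF
def MNPF : Fml → Prop := MNProv (fun A => AxP A ∨ AxF A)
def MNDF : Fml → Prop := MNProv (fun A => AxD A ∨ AxF A)

/-- An MN-frame: a nonempty set `W` together with a relation between worlds and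
nonempty subsets of `W` satisfying monotonicity. -/
structure MNFrame (W : Type*) where
  nonempty : Nonempty W
  rel : W → Set W → Prop
  rel_nonempty : ∀ (x : W) (V : Set W), rel x V → V.Nonempty
  mono : ∀ (x : W) (V U : Set W), rel x V → V ⊆ U → rel x U

/-- `Sat` is a satisfaction relation on the MN-frame `F`. -/
structure IsSat {W : Type*} (F : MNFrame W) (Sat : W → Fml → Prop) : Prop where
  bot : ∀ x : W, ¬ Sat x Fml.bot
  imp : ∀ (x : W) (A B : Fml), Sat x (A.imp B) ↔ (Sat x A → Sat x B)
  box : ∀ (x : W) (A : Fml), Sat x A.box ↔ ∀ V : Set W, F.rel x V → ∃ y ∈ V, Sat y A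

/-- A formula is valid in an MN-frame if it is satisfied at every world under
every satisfaction relation on the frame. -/
def Valid {W : Type*} (F : MNFrame W) (A : Fml) : Prop :=
  ∀ Sat : W → Fml → Prop, IsSat F Sat → ∀ x : W, Sat x A

/-- Transitivity of an MN-frame. -/
def MNFrame.IsTransitive {W : Type*} (F : MNFrame W) : Prop :=
  ∀ (x : W) (V : Set W) (U : W → Set W),
    F.rel x V → (∀ y ∈ V, F.rel y (U y)) → F.rel x (⋃ y ∈ V, U y)

/-- MNP-frames: every world is related to some subset. -/
def MNFrame.IsMNP {W : Type*} (F : MNFrame W) : Prop :=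
  ∀ x : W, ∃ V : Set W, F.rel x V

/-- MND-frames: every world is related to `V` or to its complement. -/
def MNFrame.IsMND {W : Type*} (F : MNFrame W) : Prop :=
  ∀ (x : W) (V : Set W), F.rel x V ∨ F.rel x Vᶜ

namespace Stmt8
open Fml

/-- Subformula list. -/
def subf : Fml → List Fml
  | .var n => [.var n]
  | .bot => [.bot]
  | .imp B C => .imp B C :: (subf B ++ subf C)
  | .box B => .box B :: subf B

lemma mem_subf_self (B : Fml) : B ∈ subf B := by
  cases B <;> simp [subf]

lemma subf_trans : ∀ (X B C : Fml), B ∈ subf X → C ∈ subf B → C ∈ subf X := by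
  intro X
  induction X with
  | var n => intro B C hB hC; simp [subf] at hB; subst hB; exact hC
  | bot => intro B C hB hC; simp [subf] at hB; subst hB; exact hC
  | imp P Q ihP ihQ =>
      intro B C hB hC
      simp [subf] at hB ⊢
      rcases hB with hB | hB | hB
      · subst hB; simpa [subf] using hC
      · exact Or.inr (Or.inl (ihP B C hB hC))
      · exact Or.inr (Or.inr (ihQ B C hB hC))
  | box P ihP =>
      intro B C hB hC
      simp [subf] at hB ⊢
      rcases hB with hB | hB
      · subst hB; simpa [subf] using hC
      · exact Or.inr (ihP B C hB hC)

section Bool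
variable {val : Fml → Bool} (hb : val Fml.bot = false)
  (hi : ∀ B C, val (Fml.imp B C) = (!val B || val C))

include hb hi

lemma val_neg (B : Fml) : val B.neg = !val B := by
  simp [Fml.neg, hi, hb]

lemma val_and (B C : Fml) : val (B.and C) = (val B && val C) := by
  simp [Fml.and, Fml.neg, hi, hb]

lemma val_top : val Fml.top = true := by
  simp [Fml.top, Fml.neg, hi, hb]

end Bool

/-- Characteristic formula of a set `w` of formulas relative to list `L`. -/
def chi (L : List Fml) (w : Finset Fml) : Fml :=
  L.foldr (fun B acc => Fml.and (if B ∈ w then B else B.neg) acc) Fml.top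

lemma chi_spec {val : Fml → Bool} (hb : val Fml.bot = false)
    (hi : ∀ B C, val (Fml.imp B C) = (!val B || val C))
    (L : List Fml) (w : Finset Fml) :
    val (chi L w) = true ↔ ∀ B ∈ L, val B = decide (B ∈ w) := by
  induction L with
  | nil => simp [chi, val_top hb hi]
  | cons B L ih =>
      simp only [chi, List.foldr_cons] at *
      rw [val_and hb hi, Bool.and_eq_true, ih]
      constructor
      · rintro ⟨h1, h2⟩ C hC
        rcases List.mem_cons.mp hC with hC | hC
        · subst hC
          by_cases hw : C ∈ w
          · simpa [hw] using h1
          · rw [if_neg hw, val_neg hb hi] at h1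
            simp only [hw, decide_eq_false_iff_not, decide_eq_true_eq]
            simpa using h1
        · exact h2 C hC
      · intro h
        refine ⟨?_, fun C hC => h C (List.mem_cons_of_mem _ hC)⟩
        have := h B (List.mem_cons_self (a := B) (l := L))
        by_cases hw : B ∈ w <;> simp [hw] at this <;> simp [hw, this, val_neg hb hi]

/-- Disjunction of a list of formulas. -/
def bigOr : List Fml → Fml
  | [] => Fml.bot
  | E :: l => Fml.imp E.neg (bigOr l)

lemma val_bigOr_of_mem {val : Fml → Bool} (hb : val Fml.bot = false)
    (hi : ∀ B C, val (Fml.imp B C) = (!val B || val C))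
    {E : Fml} : ∀ {l : List Fml}, E ∈ l → val E = true → val (bigOr l) = true := by
  intro l
  induction l with
  | nil => simp
  | cons F l ih =>
      intro hE hval
      simp only [bigOr, hi, val_neg hb hi]
      rcases List.mem_cons.mp hE with h | h
      · subst h; simp [hval]
      · simp [ih h hval]
lemma taut_comm (P Q R : Fml) :
    IsTautology ((P.imp (Q.imp R)).imp (Q.imp (P.imp R))) := by
  intro val hb hi
  simp only [hi]
  cases val P <;> cases val Q <;> cases val R <;> rfl

lemma taut_nandneg (P Q : Fml) :
    IsTautology (((P.and Q.neg).neg).imp (P.imp Q)) := by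
  intro val hb hi
  simp only [hi, val_neg hb hi, val_and hb hi]
  cases val P <;> cases val Q <;> rfl

lemma taut_nand (P Q : Fml) :
    IsTautology (((P.and Q).neg).imp (P.imp Q.neg)) := by
  intro val hb hi
  simp only [hi, val_neg hb hi, val_and hb hi]
  cases val P <;> cases val Q <;> rfl

lemma taut_dneg (P : Fml) : IsTautology (P.neg.neg.imp P) := by
  intro val hb hi
  simp only [hi, val_neg hb hi]
  cases val P <;> rfl

lemma taut_pair (P Q : Fml) : IsTautology (P.imp (Q.imp (P.and Q))) := by
  intro val hb hi
  simp only [hi, val_and hb hi]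
  cases val P <;> cases val Q <;> rfl

lemma taut_negself (P : Fml) : IsTautology (P.neg.imp ((P.and P).neg)) := by
  intro val hb hi
  simp only [hi, val_neg hb hi, val_and hb hi]
  cases val P <;> rfl

lemma neg_chi_taut {L : List Fml} {w : Finset Fml}
    (h : ∀ val : Fml → Bool, val Fml.bot = false →
      (∀ B C, val (Fml.imp B C) = (!val B || val C)) →
      (∀ B ∈ L, val B = decide (B ∈ w)) → False) :
    IsTautology (chi L w).neg := by
  intro val hb hi
  rw [val_neg hb hi]
  by_cases hchi : val (chi L w) = true
  · exact absurd ((chi_spec hb hi L w).mp hchi) (fun hs => h val hb hi hs)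
  · simp only [Bool.not_eq_true] at hchi; simp [hchi]

lemma imp_neg_chi_taut {L : List Fml} {w : Finset Fml} {D : Fml}
    (h : ∀ val : Fml → Bool, val Fml.bot = false →
      (∀ B C, val (Fml.imp B C) = (!val B || val C)) →
      (∀ B ∈ L, val B = decide (B ∈ w)) → val D = false) :
    IsTautology (D.imp (chi L w).neg) := by
  intro val hb hi
  rw [hi, val_neg hb hi]
  by_cases hchi : val (chi L w) = true
  · have := h val hb hi ((chi_spec hb hi L w).mp hchi)
    simp [this]
  · simp only [Bool.not_eq_true] at hchi; simp [hchi]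

lemma elim_or (D : Fml) : ∀ l : List Fml,
    MND (D.imp (bigOr l)) → (∀ E ∈ l, MND E.neg) → MND D.neg := by
  intro l
  induction l with
  | nil => intro h _; exact h
  | cons E l ih =>
      intro h hall
      have h' : MND (D.imp (E.neg.imp (bigOr l))) := h
      have h1 : MND (E.neg.imp (D.imp (bigOr l))) :=
        .mp (.taut (taut_comm D E.neg (bigOr l))) h'
      exact ih (.mp h1 (hall E List.mem_cons_self))
        (fun F hF => hall F (List.mem_cons_of_mem _ hF))

lemma lindenbaum (L : List Fml) (D : Fml) (Q : Finset Fml → Prop)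
    (hcompat : ∀ val : Fml → Bool, val Fml.bot = false →
      (∀ B C, val (Fml.imp B C) = (!val B || val C)) →
      val D = true → Q (L.toFinset.filter (fun B => val B = true)))
    (hcon : ¬ MND D.neg) :
    ∃ w : Finset Fml, w ⊆ L.toFinset ∧ Q w ∧ ¬ MND ((chi L w).neg) := by
  by_contra hno
  push_neg at hno
  classical
  set ws := (L.toFinset.powerset.filter Q).toList with hws
  apply hcon
  apply elim_or D (ws.map (chi L))
  · apply MNProv.taut
    intro val hb hi
    rw [hi]
    by_cases hD : val D = true
    · have hQ := hcompat val hb hi hD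
      have hmem : (chi L (L.toFinset.filter (fun B => val B = true))) ∈ ws.map (chi L) := by
        apply List.mem_map_of_mem
        rw [hws, Finset.mem_toList, Finset.mem_filter, Finset.mem_powerset]
        exact ⟨Finset.filter_subset _ _, hQ⟩
      have hval : val (chi L (L.toFinset.filter (fun B => val B = true))) = true := by
        rw [chi_spec hb hi]
        intro B hB
        have hBF : B ∈ L.toFinset := List.mem_toFinset.mpr hB
        by_cases hv : val B = true
        · simp [Finset.mem_filter, hBF, hv]
        · simp only [Bool.not_eq_true] at hv
          simp [Finset.mem_filter, hv]
      simp [val_bigOr_of_mem hb hi hmem hval]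
    · simp only [Bool.not_eq_true] at hD; simp [hD]
  · intro E hE
    rcases List.mem_map.mp hE with ⟨w, hw, rfl⟩
    rw [hws, Finset.mem_toList, Finset.mem_filter, Finset.mem_powerset] at hw
    exact hno w hw.1 hw.2
section Con
variable {L : List Fml} {w : Finset Fml} {B C : Fml}
variable (hCon : ¬ MND ((chi L w).neg))

include hCon

lemma con_pair (hCL : C.box ∈ L) (hBL : B.box ∈ L)
    (hC : C.box ∈ w) (hB : B.box ∈ w) : ¬ MND ((C.and B).neg) := by
  intro h
  have h1 : MND (C.imp B.neg) := .mp (.taut (taut_nand C B)) h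
  have h2 : MND ((C.box).imp (B.neg.box)) := .rm h1
  have h3 : MND ((B.box.and B.neg.box).neg) := .ax ⟨B, rfl⟩
  have h4 : MND ((C.box.imp B.neg.box).and ((B.box.and B.neg.box).neg)) :=
    .mp (.mp (.taut (taut_pair _ _)) h2) h3
  apply hCon
  refine .mp (.taut (imp_neg_chi_taut ?_)) h4
  intro val hb hi hspec
  have hc := hspec _ hCL
  have hbb := hspec _ hBL
  rw [decide_eq_true hC] at hc
  rw [decide_eq_true hB] at hbb
  simp only [val_and hb hi, val_neg hb hi, hi, hc, hbb]
  cases val (B.neg.box) <;> rfl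

lemma con_dual (hCL : C.box ∈ L) (hBL : B.box ∈ L)
    (hC : C.box ∈ w) (hB : B.box ∉ w) : ¬ MND ((C.and B.neg).neg) := by
  intro h
  have h1 : MND (C.imp B) := .mp (.taut (taut_nandneg C B)) h
  have h2 : MND ((C.box).imp (B.box)) := .rm h1
  apply hCon
  refine .mp (.taut (imp_neg_chi_taut ?_)) h2
  intro val hb hi hspec
  have hc := hspec _ hCL
  have hbb := hspec _ hBL
  rw [decide_eq_true hC] at hc
  rw [decide_eq_false hB] at hbb
  simp [hi, hc, hbb]

lemma con_negB (hBL : B.box ∈ L) (hB : B.box ∉ w) : ¬ MND B.neg.neg := by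
  intro h
  have h1 : MND B := .mp (.taut (taut_dneg B)) h
  have h2 : MND B.box := .nec h1
  apply hCon
  refine .mp (.taut (imp_neg_chi_taut ?_)) h2
  intro val hb hi hspec
  have hbb := hspec _ hBL
  rw [decide_eq_false hB] at hbb
  exact hbb

lemma con_single (hCL : C.box ∈ L) (hC : C.box ∈ w) : ¬ MND C.neg := by
  intro h
  exact con_pair hCon hCL hCL hC hC (.mp (.taut (taut_negself C)) h)

lemma con_bot (h : Fml.bot ∈ L) : Fml.bot ∉ w := by
  intro hw
  apply hCon
  apply MNProv.taut
  apply neg_chi_taut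
  intro val hb hi hspec
  have := hspec _ h
  rw [decide_eq_true hw, hb] at this
  exact Bool.false_ne_true this

lemma con_imp (hiL : B.imp C ∈ L) (hBL : B ∈ L) (hCL : C ∈ L) :
    (B.imp C ∈ w ↔ (B ∈ w → C ∈ w)) := by
  by_contra hmis
  apply hCon
  apply MNProv.taut
  apply neg_chi_taut
  intro val hb hi hspec
  have h1 := hspec _ hiL
  have h2 := hspec _ hBL
  have h3 := hspec _ hCL
  rw [hi, h2, h3] at h1
  apply hmis
  by_cases hB : B ∈ w <;> by_cases hC' : C ∈ w <;>
    simp [hB, hC'] at h1 ⊢ <;> simp_all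

end Con
def World (L : List Fml) : Type :=
  {w : Finset Fml // w ⊆ L.toFinset ∧ ¬ MND ((chi L w).neg)}

instance (L : List Fml) : Finite (World L) := by
  apply Finite.of_injective
    (fun x : World L => (⟨x.val, Finset.mem_powerset.mpr x.2.1⟩ :
      {w // w ∈ L.toFinset.powerset}))
  intro a b hab
  exact Subtype.ext (Subtype.mk_eq_mk.mp hab)

def crel (L : List Fml) (x : World L) (V : Set (World L)) : Prop :=
  V.Nonempty ∧ ∀ C, Fml.box C ∈ L → Fml.box C ∈ x.val → ∃ y ∈ V, C ∈ y.val

def CSat (L : List Fml) : Fml → World L → Prop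
  | .var n => fun x => .var n ∈ x.val
  | .bot => fun _ => False
  | .imp B C => fun x => CSat L B x → CSat L C x
  | .box B => fun x => ∀ V : Set (World L), crel L x V → ∃ y ∈ V, CSat L B y

def cframe (L : List Fml) (h : Nonempty (World L)) : MNFrame (World L) where
  nonempty := h
  rel := crel L
  rel_nonempty := fun _ _ hV => hV.1
  mono := fun _ V U hV hVU =>
    ⟨hV.1.mono hVU, fun C hCL hCx => by
      obtain ⟨y, hy, hyC⟩ := hV.2 C hCL hCx
      exact ⟨y, hVU hy, hyC⟩⟩

lemma cframe_isSat (L : List Fml) (h : Nonempty (World L)) :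
    IsSat (cframe L h) (fun x B => CSat L B x) where
  bot := fun x => by simp [CSat]
  imp := fun x A B => Iff.rfl
  box := fun x A => Iff.rfl

section Canon

variable {L : List Fml} (hcl : ∀ B ∈ L, ∀ C ∈ subf B, C ∈ L)

include hcl

lemma exists_world_pair {x : World L} {C C' : Fml}
    (hCL : C.box ∈ L) (hCx : C.box ∈ x.val)
    (hC'L : C'.box ∈ L) (hC'x : C'.box ∈ x.val) :
    ∃ y : World L, C ∈ y.val ∧ C' ∈ y.val := by
  have hCs : C ∈ L := hcl _ hCL _ (by simp [subf, mem_subf_self])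
  have hC's : C' ∈ L := hcl _ hC'L _ (by simp [subf, mem_subf_self])
  obtain ⟨w, hsub, hQ, hconw⟩ := lindenbaum L (C.and C') (fun w => C ∈ w ∧ C' ∈ w)
    (by
      intro val hb hi hval
      rw [val_and hb hi, Bool.and_eq_true] at hval
      constructor <;> rw [Finset.mem_filter] <;>
        exact ⟨List.mem_toFinset.mpr (by assumption), by tauto⟩)
    (con_pair x.2.2 hCL hC'L hCx hC'x)
  exact ⟨⟨w, hsub, hconw⟩, hQ.1, hQ.2⟩

lemma cframe_isMND (h : Nonempty (World L)) : (cframe L h).IsMND := by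
  intro x V
  by_cases hV : crel L x V
  · exact Or.inl hV
  right
  show crel L x Vᶜ
  by_cases hne : V.Nonempty
  · have hsnd : ¬ ∀ C, Fml.box C ∈ L → Fml.box C ∈ x.val → ∃ y ∈ V, C ∈ y.val := by
      intro hs; exact hV ⟨hne, hs⟩
    push_neg at hsnd
    obtain ⟨C₀, hC₀L, hC₀x, hC₀⟩ := hsnd
    constructor
    · obtain ⟨y, hyC, _⟩ := exists_world_pair hcl hC₀L hC₀x hC₀L hC₀x
      exact ⟨y, fun hy => (hC₀ y hy) hyC⟩
    · intro C hCL hCx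
      obtain ⟨y, hyC, hyC₀⟩ := exists_world_pair hcl hCL hCx hC₀L hC₀x
      exact ⟨y, fun hy => (hC₀ y hy) hyC₀, hyC⟩
  · constructor
    · exact ⟨x, fun hx => hne ⟨x, hx⟩⟩
    · intro C hCL hCx
      obtain ⟨y, hyC, _⟩ := exists_world_pair hcl hCL hCx hCL hCx
      exact ⟨y, fun hy => hne ⟨y, hy⟩, hyC⟩

lemma truth : ∀ B : Fml, B ∈ L → ∀ x : World L, CSat L B x ↔ B ∈ x.val := by
  intro B
  induction B with
  | var n => intro _ x; simp [CSat]
  | bot =>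
      intro h x
      simp only [CSat, false_iff]
      exact fun hx => con_bot x.2.2 h hx
  | imp B C ihB ihC =>
      intro h x
      have hB : B ∈ L := hcl _ h _ (by simp [subf, mem_subf_self])
      have hC : C ∈ L := hcl _ h _ (by simp [subf, mem_subf_self])
      simp only [CSat, ihB hB x, ihC hC x]
      exact (con_imp x.2.2 h hB hC).symm
  | box B ihB =>
      intro h x
      have hBL : B ∈ L := hcl _ h _ (by simp [subf, mem_subf_self])
      constructor
      · intro hsat
        by_contra hnx
        have hrel : crel L x {y : World L | B ∉ y.val} := by
          constructor
          · obtain ⟨w, hsub, hQ, hconw⟩ := lindenbaum L B.neg (fun w => B ∉ w)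
              (by
                intro val hb hi hval
                rw [val_neg hb hi, Bool.not_eq_true'] at hval
                intro hmem
                rw [Finset.mem_filter] at hmem
                rw [hval] at hmem
                exact Bool.false_ne_true hmem.2)
              (con_negB x.2.2 h hnx)
            exact ⟨⟨w, hsub, hconw⟩, hQ⟩
          · intro C hCL hCx
            have hCs : C ∈ L := hcl _ hCL _ (by simp [subf, mem_subf_self])
            obtain ⟨w, hsub, hQ, hconw⟩ := lindenbaum L (C.and B.neg)
              (fun w => C ∈ w ∧ B ∉ w)
              (by
                intro val hb hi hval
                rw [val_and hb hi, val_neg hb hi, Bool.and_eq_true,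
                  Bool.not_eq_true'] at hval
                constructor
                · rw [Finset.mem_filter]
                  exact ⟨List.mem_toFinset.mpr hCs, hval.1⟩
                · intro hmem
                  rw [Finset.mem_filter] at hmem
                  rw [hval.2] at hmem
                  exact Bool.false_ne_true hmem.2)
              (con_dual x.2.2 hCL h hCx hnx)
            exact ⟨⟨w, hsub, hconw⟩, hQ.2, hQ.1⟩
        obtain ⟨y, hyV, hyB⟩ := hsat _ hrel
        exact hyV ((ihB hBL y).mp hyB)
      · intro hmem V hrelV
        obtain ⟨y, hy, hyB⟩ := hrelV.2 B h hmem
        exact ⟨y, hy, (ihB hBL y).mpr hyB⟩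

end Canon
lemma soundness {A : Fml} (h : MND A) :
    ∀ (W : Type) (F : MNFrame W), F.IsMND → Valid F A := by
  induction h with
  | taut ht =>
      intro W F _ Sat hS x
      classical
      set val : Fml → Bool := fun B => if Sat x B then true else false with hval
      have hb : val Fml.bot = false := by simp [hval, hS.bot x]
      have hi : ∀ B C, val (Fml.imp B C) = (!val B || val C) := by
        intro B C
        by_cases h1 : Sat x B <;> by_cases h2 : Sat x C <;>
          simp [hval, h1, h2, hS.imp x B C]
      have hT := ht val hb hi
      by_contra hA
      simp [hval, hA] at hT
  | ax hax =>
      intro W F hMND Sat hS x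
      obtain ⟨B, rfl⟩ := hax
      have negSat : ∀ (y : W) (P : Fml), Sat y P.neg ↔ ¬ Sat y P := by
        intro y P
        rw [Fml.neg, hS.imp]
        exact ⟨fun h hP => hS.bot y (h hP), fun h hP => absurd hP h⟩
      have andSat : ∀ (y : W) (P Q : Fml), Sat y (P.and Q) ↔ (Sat y P ∧ Sat y Q) := by
        intro y P Q
        rw [Fml.and, negSat, hS.imp, negSat]
        tauto
      rw [negSat, andSat]
      rintro ⟨h1, h2⟩
      rw [hS.box] at h1 h2
      rcases hMND x {y | Sat y B} with hrel | hrel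
      · obtain ⟨y, hy, hyB⟩ := h2 _ hrel
        rw [negSat] at hyB
        exact hyB hy
      · obtain ⟨y, hy, hyB⟩ := h1 _ hrel
        exact hy hyB
  | mp h1 h2 ih1 ih2 =>
      intro W F hM Sat hS x
      exact (hS.imp x _ _).mp (ih1 W F hM Sat hS x) (ih2 W F hM Sat hS x)
  | nec h ih =>
      intro W F hM Sat hS x
      rw [hS.box]
      intro V hV
      obtain ⟨y, hy⟩ := F.rel_nonempty x V hV
      exact ⟨y, hy, ih W F hM Sat hS y⟩
  | rm h ih =>
      intro W F hM Sat hS x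
      rw [hS.imp]
      intro hbox
      rw [hS.box] at hbox ⊢
      intro V hV
      obtain ⟨y, hy, hyA⟩ := hbox V hV
      exact ⟨y, hy, (hS.imp y _ _).mp (ih W F hM Sat hS y) hyA⟩

lemma completeness {A : Fml}
    (h : ∀ (W : Type) (F : MNFrame W), Finite W → F.IsMND → Valid F A) : MND A := by
  by_contra hA
  set L := subf A with hL
  have hcl : ∀ B ∈ L, ∀ C ∈ subf B, C ∈ L := fun B hB C hC => subf_trans A B C hB hC
  have hAL : A ∈ L := mem_subf_self A
  obtain ⟨w, hsub, hQ, hconw⟩ := lindenbaum L A.neg (fun w => A ∉ w)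
    (by
      intro val hb hi hval
      rw [val_neg hb hi, Bool.not_eq_true'] at hval
      intro hmem
      rw [Finset.mem_filter] at hmem
      rw [hval] at hmem
      exact Bool.false_ne_true hmem.2)
    (fun hnn => hA (.mp (.taut (taut_dneg A)) hnn))
  set x₀ : World L := ⟨w, hsub, hconw⟩
  have hNE : Nonempty (World L) := ⟨x₀⟩
  have hval := h (World L) (cframe L hNE) inferInstance (cframe_isMND hcl hNE)
  have hs := hval (fun x B => CSat L B x) (cframe_isSat L hNE) x₀
  rw [truth hcl A hAL x₀] at hs
  exact hQ hs

end Stmt8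
/-- A formula is a theorem of MND iff it is valid in all MND-frames
iff it is valid in all finite MND-frames. -/
theorem stmt8 (A : Fml) :
    (MND A ↔ ∀ (W : Type) (F : MNFrame W), F.IsMND → Valid F A) ∧
    (MND A ↔ ∀ (W : Type) (F : MNFrame W), Finite W → F.IsMND → Valid F A) := by
  constructor
  · constructor
    · exact fun h W F hM => Stmt8.soundness h W F hM
    · intro h
      exact Stmt8.completeness fun W F _ hM => h W F hM
  · constructor
    · exact fun h W F _ hM => Stmt8.soundness h W F hM
    · exact Stmt8.completeness
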